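/- Let L be a finite geometric lattice. A subset 𝓖 ⊆ L \ {0̂} is a building set if and only if (a) 𝓖 contains every irreducible element of L \ {0̂}, and (b) for all G, G' ∈ 𝓖 with G ∧ G' ≠ 0̂, one has G ∨ G' ∈ 𝓖. -/

import Mathlib

variable {L : Type*} [CompleteLattice L] [Fintype L]

/-- A finite lattice is geometric if it is atomistic and (upper)
semimodular. -/
def IsGeometricLattice (L : Type*) [CompleteLattice L] [Fintype L] : Prop :=
  IsAtomistic L ∧ ∀ a b : L, a ⊓ b ⋖ a → b ⋖ a ⊔ b

/-- The maximal elements of `{G ∈ 𝓖 : G ≤ F}`. -/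
def maxUnder (𝓖 : Set L) (F : L) : Set L :=
  {G | G ∈ 𝓖 ∧ G ≤ F ∧ ∀ G' ∈ 𝓖, G' ≤ F → G ≤ G' → G' = G}

/-- `𝓖 ⊆ L \ {⊥}` is a *building set* if for every `F ≠ ⊥`, the join map
from the product of the intervals `[⊥, G]`, `G` ranging over the maximal
elements of `𝓖` below `F`, to the interval `[⊥, F]` is an order
isomorphism. -/
def IsBuildingSet (𝓖 : Set L) : Prop :=
  (∀ G ∈ 𝓖, G ≠ ⊥) ∧
  ∀ F : L, F ≠ ⊥ →
    ∃ φ : (∀ G : maxUnder 𝓖 F, Set.Iic (G : L)) ≃o Set.Iic F,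
      ∀ h, (φ h : L) = ⨆ G, ((h G : L))

/-- An element `F ≠ ⊥` of a lattice is *irreducible* if the interval `[⊥, F]`
admits only trivial direct product decompositions: there is no pair of nonzero
elements `G, H` with `G ⊔ H = F` such that the join map gives an order
isomorphism `[⊥, G] × [⊥, H] ≅ [⊥, F]`. -/
def IsIrred (F : L) : Prop :=
  F ≠ ⊥ ∧ ¬ ∃ G H : L, G ≠ ⊥ ∧ H ≠ ⊥ ∧ G ⊔ H = F ∧
    ∃ φ : (Set.Iic G × Set.Iic H) ≃o Set.Iic F,
      ∀ p, (φ p : L) = (p.1 : L) ⊔ (p.2 : L)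


open Classical

section JD

variable {ι : Type*} {C : ι → L} {F : L}
  (Φ : ((i : ι) → Set.Iic (C i)) ≃o Set.Iic F)
  (hΦ : ∀ h, ((Φ h : Set.Iic F) : L) = ⨆ i, (h i : L))

/-- the "indicator" element of the product. -/
noncomputable def sel (S : Set ι) : (i : ι) → Set.Iic (C i) :=
  fun i => if i ∈ S then ⟨C i, le_rfl⟩ else ⟨⊥, bot_le⟩

theorem sel_coe (S : Set ι) (i : ι) :
    ((sel (C := C) S i : Set.Iic (C i)) : L) = if i ∈ S then C i else ⊥ := by
  unfold sel; split <;> rfl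

include hΦ

theorem JD_sel (S : Set ι) : ((Φ (sel S) : Set.Iic F) : L) = ⨆ i ∈ S, C i := by
  rw [hΦ]
  refine le_antisymm (iSup_le fun i => ?_) (iSup₂_le fun i hi => ?_)
  · rw [sel_coe]
    split
    · exact le_iSup₂_of_le i ‹_› le_rfl
    · exact bot_le
  · refine le_iSup_of_le i ?_
    rw [sel_coe, if_pos hi]

theorem JD_le_F (i : ι) : C i ≤ F := by
  have := (Φ (sel {i})).2
  rwa [JD_sel Φ hΦ, iSup_singleton] at this

theorem JD_sup_eq : ⨆ i, C i = F := by
  refine le_antisymm (iSup_le (JD_le_F Φ hΦ)) ?_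
  have h1 : Φ (Φ.symm ⟨F, le_rfl⟩) = ⟨F, le_rfl⟩ := Φ.apply_symm_apply _
  have h2 : F = ⨆ i, ((Φ.symm ⟨F, le_rfl⟩) i : L) := by
    conv_lhs => rw [show F = ((⟨F, le_rfl⟩ : Set.Iic F) : L) from rfl, ← h1]
    rw [hΦ]
  rw [h2]
  exact iSup_mono fun i => (Φ.symm ⟨F, le_rfl⟩ i).2

/-- key coordinate computation -/
theorem JD_coord {x : L} (hx : x ≤ F) (i : ι) :
    ((Φ.symm ⟨x, hx⟩ i : Set.Iic (C i)) : L) = x ⊓ C i := by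
  have hxeq : x = ⨆ j, ((Φ.symm ⟨x, hx⟩ j : Set.Iic (C j)) : L) := by
    conv_lhs => rw [show x = ((⟨x, hx⟩ : Set.Iic F) : L) from rfl,
      ← Φ.apply_symm_apply ⟨x, hx⟩]
    rw [hΦ]
  refine le_antisymm (le_inf ?_ (Φ.symm ⟨x, hx⟩ i).2) ?_
  · conv_rhs => rw [hxeq]
    exact le_iSup (fun j => ((Φ.symm ⟨x, hx⟩ j : Set.Iic (C j)) : L)) i
  · -- x ⊓ C i ≤ coordinate i
    set y : L := x ⊓ C i with hy
    have hyF : y ≤ F := le_trans inf_le_left hx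
    have h1 : Φ.symm ⟨y, hyF⟩ ≤ Φ.symm ⟨x, hx⟩ :=
      Φ.symm.monotone (by exact inf_le_left)
    have h2 : Φ.symm ⟨y, hyF⟩ ≤ sel {i} := by
      have : (⟨y, hyF⟩ : Set.Iic F) ≤ Φ (sel {i}) := by
        have := JD_sel Φ hΦ {i}
        rw [iSup_singleton] at this
        show y ≤ _
        rw [this]
        exact inf_le_right
      simpa using Φ.symm.monotone this
    have hyeq : y = ⨆ j, ((Φ.symm ⟨y, hyF⟩ j : Set.Iic (C j)) : L) := by
      conv_lhs => rw [show y = ((⟨y, hyF⟩ : Set.Iic F) : L) from rfl,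
        ← Φ.apply_symm_apply ⟨y, hyF⟩]
      rw [hΦ]
    rw [hyeq]
    refine iSup_le fun j => ?_
    rcases eq_or_ne j i with rfl | hj
    · exact Subtype.coe_le_coe.mpr (h1 j)
    · have hz : ((Φ.symm ⟨y, hyF⟩ j : Set.Iic (C j)) : L) ≤ (sel (C := C) {i} j : L) :=
        Subtype.coe_le_coe.mpr (h2 j)
      rw [sel_coe, if_neg (by simpa using hj)] at hz
      exact le_trans hz bot_le

theorem JD_sup_inf {x : L} (hx : x ≤ F) : x = ⨆ i, x ⊓ C i := by
  have hxeq : x = ⨆ j, ((Φ.symm ⟨x, hx⟩ j : Set.Iic (C j)) : L) := by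
    conv_lhs => rw [show x = ((⟨x, hx⟩ : Set.Iic F) : L) from rfl,
      ← Φ.apply_symm_apply ⟨x, hx⟩]
    rw [hΦ]
  conv_lhs => rw [hxeq]
  exact iSup_congr fun i => JD_coord Φ hΦ hx i

theorem JD_apply_inf (h : (i : ι) → Set.Iic (C i)) (i : ι) :
    ((Φ h : Set.Iic F) : L) ⊓ C i = (h i : L) := by
  have := JD_coord Φ hΦ (Φ h).2 i
  rw [show (⟨((Φ h : Set.Iic F) : L), (Φ h).2⟩ : Set.Iic F) = Φ h from rfl,
    Φ.symm_apply_apply] at this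
  exact this.symm

theorem JD_inf_sup {x : L} (hx : x ≤ F) (S : Set ι) :
    x ⊓ (⨆ i ∈ S, C i) = ⨆ i ∈ S, x ⊓ C i := by
  refine le_antisymm ?_ (iSup₂_le fun i hi => le_inf inf_le_left
    (le_trans inf_le_right (le_iSup₂_of_le i hi le_rfl)))
  set z : L := x ⊓ ⨆ i ∈ S, C i with hz
  have hzF : z ≤ F := le_trans inf_le_left hx
  have h1 : Φ.symm ⟨z, hzF⟩ ≤ Φ.symm ⟨x, hx⟩ := Φ.symm.monotone (by exact inf_le_left)
  have h2 : Φ.symm ⟨z, hzF⟩ ≤ sel S := by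
    have h := Φ.symm.monotone (show (⟨z, hzF⟩ : Set.Iic F) ≤ Φ (sel S) from
      Subtype.coe_le_coe.mp (by rw [JD_sel Φ hΦ]; exact inf_le_right))
    rwa [Φ.symm_apply_apply] at h
  have hzeq : z = ⨆ j, ((Φ.symm ⟨z, hzF⟩ j : Set.Iic (C j)) : L) := by
    conv_lhs => rw [show z = ((⟨z, hzF⟩ : Set.Iic F) : L) from rfl,
      ← Φ.apply_symm_apply ⟨z, hzF⟩]
    rw [hΦ]
  conv_lhs => rw [hzeq]
  refine iSup_le fun j => ?_
  by_cases hj : j ∈ S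
  · refine le_iSup₂_of_le j hj ?_
    have h1' := Subtype.coe_le_coe.mpr (h1 j)
    rw [JD_coord Φ hΦ hx j] at h1'
    exact le_inf (le_trans h1' inf_le_left) (Φ.symm ⟨z, hzF⟩ j).2
  · have hz' : ((Φ.symm ⟨z, hzF⟩ j : Set.Iic (C j)) : L) ≤ (sel (C := C) S j : L) :=
      Subtype.coe_le_coe.mpr (h2 j)
    rw [sel_coe, if_neg hj] at hz'
    exact le_trans hz' bot_le

theorem JD_disj' {S T : Set ι} (hST : Disjoint S T) :
    (⨆ i ∈ S, C i) ⊓ (⨆ i ∈ T, C i) = ⊥ := by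
  set x : L := (⨆ i ∈ S, C i) ⊓ (⨆ i ∈ T, C i) with hx
  have hxF : x ≤ F := le_trans inf_le_left (iSup₂_le fun i _ => JD_le_F Φ hΦ i)
  have h1 : Φ.symm ⟨x, hxF⟩ ≤ sel S := by
    have h := Φ.symm.monotone (show (⟨x, hxF⟩ : Set.Iic F) ≤ Φ (sel S) from
      Subtype.coe_le_coe.mp (by rw [JD_sel Φ hΦ]; exact inf_le_left))
    rwa [Φ.symm_apply_apply] at h
  have h2 : Φ.symm ⟨x, hxF⟩ ≤ sel T := by
    have h := Φ.symm.monotone (show (⟨x, hxF⟩ : Set.Iic F) ≤ Φ (sel T) from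
      Subtype.coe_le_coe.mp (by rw [JD_sel Φ hΦ]; exact inf_le_right))
    rwa [Φ.symm_apply_apply] at h
  have hxeq : x = ⨆ j, ((Φ.symm ⟨x, hxF⟩ j : Set.Iic (C j)) : L) := by
    conv_lhs => rw [show x = ((⟨x, hxF⟩ : Set.Iic F) : L) from rfl,
      ← Φ.apply_symm_apply ⟨x, hxF⟩]
    rw [hΦ]
  refine le_bot_iff.mp ?_
  rw [hxeq]
  refine iSup_le fun j => ?_
  by_cases hj : j ∈ S
  · have hz : ((Φ.symm ⟨x, hxF⟩ j : Set.Iic (C j)) : L) ≤ (sel (C := C) T j : L) :=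
      Subtype.coe_le_coe.mpr (h2 j)
    rw [sel_coe, if_neg (Set.disjoint_left.mp hST hj)] at hz
    exact hz
  · have hz : ((Φ.symm ⟨x, hxF⟩ j : Set.Iic (C j)) : L) ≤ (sel (C := C) S j : L) :=
      Subtype.coe_le_coe.mpr (h1 j)
    rw [sel_coe, if_neg hj] at hz
    exact hz

theorem JD_disj {i j : ι} (hij : i ≠ j) : C i ⊓ C j = ⊥ := by
  have := JD_disj' Φ hΦ (Set.disjoint_singleton.mpr hij)
  simpa [iSup_singleton] using this


include hΦ in

theorem JD_split (i₀ : ι) :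
    ∃ χ : (Set.Iic (C i₀) × Set.Iic (⨆ i ∈ {j | j ≠ i₀}, C i)) ≃o Set.Iic F,
      ∀ p, ((χ p : Set.Iic F) : L) = (p.1 : L) ⊔ (p.2 : L) := by
  set A := C i₀ with hA
  set B := ⨆ i ∈ {j | j ≠ i₀}, C i with hB
  have hAF : A ≤ F := JD_le_F Φ hΦ i₀
  have hBF : B ≤ F := iSup₂_le fun i _ => JD_le_F Φ hΦ i
  -- key 1 : for a ≤ A, b ≤ B : (a ⊔ b) ⊓ A = a ∧ (a ⊔ b) ⊓ B = b
  have key1 : ∀ (a b : L), a ≤ A → b ≤ B → (a ⊔ b) ⊓ A = a ∧ (a ⊔ b) ⊓ B = b := by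
    intro a b ha hb
    have hbF : b ≤ F := le_trans hb hBF
    set h : (i : ι) → Set.Iic (C i) :=
      fun i => if hi : i = i₀ then ⟨a, by rw [hi]; exact ha⟩ else ⟨b ⊓ C i, inf_le_right⟩
      with hh
    have hcoe : ∀ i, (h i : L) = if i = i₀ then a else b ⊓ C i := by
      intro i
      by_cases hi : i = i₀
      · simp only [hh, dif_pos hi, if_pos hi]
      · simp only [hh, dif_neg hi, if_neg hi]
    have hbsup : b = ⨆ i ∈ {j | j ≠ i₀}, b ⊓ C i := by
      have := JD_inf_sup Φ hΦ hbF {j | j ≠ i₀}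
      rw [← hB, inf_eq_left.mpr hb] at this
      exact this
    have hΦh : ((Φ h : Set.Iic F) : L) = a ⊔ b := by
      rw [hΦ]
      refine le_antisymm (iSup_le fun i => ?_) (sup_le ?_ ?_)
      · rw [hcoe]
        by_cases hi : i = i₀
        · rw [if_pos hi]; exact le_sup_left
        · rw [if_neg hi]; exact le_trans inf_le_left le_sup_right
      · have : a = (h i₀ : L) := by rw [hcoe, if_pos rfl]
        rw [this]
        exact le_iSup (fun i => ((h i : Set.Iic (C i)) : L)) i₀
      · rw [hbsup]
        refine iSup₂_le fun i hi => ?_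
        have : b ⊓ C i = (h i : L) := by rw [hcoe, if_neg hi]
        rw [this]
        exact le_iSup (fun i => ((h i : Set.Iic (C i)) : L)) i
    constructor
    · rw [← hΦh]
      rw [JD_apply_inf Φ hΦ h i₀, hcoe, if_pos rfl]
    · rw [← hΦh, hB, JD_inf_sup Φ hΦ (Φ h).2 {j | j ≠ i₀}]
      rw [hΦh]
      conv_rhs => rw [hbsup]
      refine iSup_congr fun i => ?_
      refine iSup_congr fun hi => ?_
      rw [← hΦh, JD_apply_inf Φ hΦ h i, hcoe, if_neg hi]
  -- key 2 : for x ≤ F : (x ⊓ A) ⊔ (x ⊓ B) = x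
  have key2 : ∀ x : L, x ≤ F → (x ⊓ A) ⊔ (x ⊓ B) = x := by
    intro x hx
    refine le_antisymm (sup_le inf_le_left inf_le_left) ?_
    conv_lhs => rw [JD_sup_inf Φ hΦ hx]
    refine iSup_le fun i => ?_
    by_cases hi : i = i₀
    · subst hi; exact le_sup_of_le_left le_rfl
    · refine le_sup_of_le_right (le_inf inf_le_left (le_trans inf_le_right ?_))
      exact le_iSup₂_of_le i hi le_rfl
  refine ⟨⟨⟨fun p => ⟨(p.1 : L) ⊔ (p.2 : L), sup_le (le_trans p.1.2 hAF) (le_trans p.2.2 hBF)⟩,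
    fun x => (⟨(x : L) ⊓ A, inf_le_right⟩, ⟨(x : L) ⊓ B, inf_le_right⟩), ?_, ?_⟩, ?_⟩,
    fun p => rfl⟩
  · intro p
    refine Prod.ext (Subtype.ext ?_) (Subtype.ext ?_)
    · exact (key1 p.1 p.2 p.1.2 p.2.2).1
    · exact (key1 p.1 p.2 p.1.2 p.2.2).2
  · intro x
    exact Subtype.ext (key2 x x.2)
  · intro p q
    show (⟨(p.1 : L) ⊔ (p.2 : L), _⟩ : Set.Iic F) ≤ ⟨(q.1 : L) ⊔ (q.2 : L), _⟩ ↔ p ≤ q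
    change (p.1 : L) ⊔ (p.2 : L) ≤ (q.1 : L) ⊔ (q.2 : L) ↔ p ≤ q
    rw [Prod.le_def]
    constructor
    · intro hle
      constructor
      · refine Subtype.coe_le_coe.mp ?_
        rw [← (key1 p.1 p.2 p.1.2 p.2.2).1, ← (key1 q.1 q.2 q.1.2 q.2.2).1]
        exact inf_le_inf_right A hle
      · refine Subtype.coe_le_coe.mp ?_
        rw [← (key1 p.1 p.2 p.1.2 p.2.2).2, ← (key1 q.1 q.2 q.1.2 q.2.2).2]
        exact inf_le_inf_right B hle
    · intro ⟨h1, h2⟩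
      exact sup_le_sup (Subtype.coe_le_coe.mpr h1) (Subtype.coe_le_coe.mpr h2)


end JD

section BIN

variable {G H F : L}
  (χ : (Set.Iic G × Set.Iic H) ≃o Set.Iic F)
  (hχ : ∀ p, ((χ p : Set.Iic F) : L) = (p.1 : L) ⊔ (p.2 : L))

include hχ

theorem bin_leF : G ≤ F ∧ H ≤ F := by
  constructor
  · have := (χ (⟨G, le_rfl⟩, ⟨⊥, bot_le⟩)).2
    rw [hχ] at this
    simpa using this
  · have := (χ (⟨⊥, bot_le⟩, ⟨H, le_rfl⟩)).2
    rw [hχ] at this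
    simpa using this

theorem bin_disj : G ⊓ H = ⊥ := by
  have hGF : G ≤ F := (bin_leF χ hχ).1
  have hHF : H ≤ F := (bin_leF χ hχ).2
  have hxF : G ⊓ H ≤ F := le_trans inf_le_left hGF
  have e1 : (⟨G, hGF⟩ : Set.Iic F) = χ (⟨G, le_rfl⟩, ⟨⊥, bot_le⟩) := by
    refine Subtype.ext ?_
    rw [hχ]; simp
  have e2 : (⟨H, hHF⟩ : Set.Iic F) = χ (⟨⊥, bot_le⟩, ⟨H, le_rfl⟩) := by
    refine Subtype.ext ?_
    rw [hχ]; simp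
  have p1 : χ.symm ⟨G ⊓ H, hxF⟩ ≤ (⟨G, le_rfl⟩, ⟨⊥, bot_le⟩) := by
    have := χ.symm.monotone (show (⟨G ⊓ H, hxF⟩ : Set.Iic F) ≤ ⟨G, hGF⟩ from
      Subtype.mk_le_mk.mpr inf_le_left)
    rwa [e1, χ.symm_apply_apply] at this
  have p2 : χ.symm ⟨G ⊓ H, hxF⟩ ≤ (⟨⊥, bot_le⟩, ⟨H, le_rfl⟩) := by
    have := χ.symm.monotone (show (⟨G ⊓ H, hxF⟩ : Set.Iic F) ≤ ⟨H, hHF⟩ from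
      Subtype.mk_le_mk.mpr inf_le_right)
    rwa [e2, χ.symm_apply_apply] at this
  have : G ⊓ H = ((χ (χ.symm ⟨G ⊓ H, hxF⟩) : Set.Iic F) : L) := by
    rw [χ.apply_symm_apply]
  rw [this, hχ]
  have h1 : ((χ.symm ⟨G ⊓ H, hxF⟩).1 : L) ≤ ⊥ := Subtype.coe_le_coe.mpr (Prod.le_def.mp p2).1
  have h2 : ((χ.symm ⟨G ⊓ H, hxF⟩).2 : L) ≤ ⊥ := Subtype.coe_le_coe.mpr (Prod.le_def.mp p1).2
  exact le_bot_iff.mp (sup_le h1 h2)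


end BIN

set_option linter.unusedSectionVars false

/-- order iso for a singleton finset -/
theorem single_iso (F : L) :
    ∃ Φ : ((C : ({F} : Finset L)) → Set.Iic (C : L)) ≃o Set.Iic F,
      ∀ h, ((Φ h : Set.Iic F) : L) = ⨆ C, (h C : L) := by
  have hF : F ∈ ({F} : Finset L) := Finset.mem_singleton_self F
  have hmem : ∀ C : ({F} : Finset L), (C : L) = F := fun C => Finset.mem_singleton.mp C.2
  have hidx : ∀ C : ({F} : Finset L), C = ⟨F, hF⟩ := fun C => Subtype.ext (hmem C)
  refine ⟨⟨⟨fun h => ⟨(h ⟨F, hF⟩ : L), (h ⟨F, hF⟩).2⟩,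
    fun x C => ⟨(x : L), le_of_le_of_eq x.2 (hmem C).symm⟩, ?_, ?_⟩, ?_⟩, ?_⟩
  · intro h
    funext C
    rw [hidx C]
  · intro x
    rfl
  · intro h h'
    constructor
    · intro hle C
      rw [hidx C]
      exact hle
    · intro hle
      exact hle ⟨F, hF⟩
  · intro h
    refine le_antisymm (le_iSup (fun C : ({F} : Finset L) => ((h C : Set.Iic _) : L)) ⟨F, hF⟩)
      (iSup_le fun C => ?_)
    rw [hidx C]
    exact le_rfl

/-- splitting a sup over a union of disjoint finsets -/
theorem iSup_union_subtype (s t : Finset L) (f : ((s : Finset L) ∪ t : Finset L) → L) :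
    ⨆ C, f C = (⨆ C : s, f ⟨(C : L), Finset.mem_union_left t C.2⟩) ⊔
      (⨆ C : t, f ⟨(C : L), Finset.mem_union_right s C.2⟩) := by
  refine le_antisymm (iSup_le fun C => ?_) (sup_le (iSup_le fun C => ?_) (iSup_le fun C => ?_))
  · rcases Finset.mem_union.mp C.2 with h | h
    · exact le_sup_of_le_left (le_iSup (fun C : s => f ⟨(C : L), Finset.mem_union_left t C.2⟩) ⟨C.1, h⟩)
    · exact le_sup_of_le_right (le_iSup (fun C : t => f ⟨(C : L), Finset.mem_union_right s C.2⟩) ⟨C.1, h⟩)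
  · exact le_iSup f _
  · exact le_iSup f _

/-- the decomposition theorem -/
theorem exists_decomp : ∀ F : L, F ≠ ⊥ →
    ∃ s : Finset L, (∀ C ∈ s, IsIrred C) ∧ (∀ C ∈ s, C ≤ F) ∧
      ∃ Φ : ((C : s) → Set.Iic (C : L)) ≃o Set.Iic F,
        ∀ h, ((Φ h : Set.Iic F) : L) = ⨆ C, (h C : L) := by
  have := wellFounded_lt (α := L)
  intro F₀
  refine this.induction (C := fun F => F ≠ ⊥ →
    ∃ s : Finset L, (∀ C ∈ s, IsIrred C) ∧ (∀ C ∈ s, C ≤ F) ∧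
      ∃ Φ : ((C : s) → Set.Iic (C : L)) ≃o Set.Iic F,
        ∀ h, ((Φ h : Set.Iic F) : L) = ⨆ C, (h C : L)) F₀ ?_
  intro F IH hF
  by_cases hirr : IsIrred F
  · obtain ⟨Φ, hΦ⟩ := single_iso F
    exact ⟨{F}, fun C hC => (Finset.mem_singleton.mp hC) ▸ hirr,
      fun C hC => le_of_eq (Finset.mem_singleton.mp hC), Φ, hΦ⟩
  · have hex : ∃ G H : L, G ≠ ⊥ ∧ H ≠ ⊥ ∧ G ⊔ H = F ∧
        ∃ φ : (Set.Iic G × Set.Iic H) ≃o Set.Iic F,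
          ∀ p, (φ p : L) = (p.1 : L) ⊔ (p.2 : L) := by
      by_contra hc
      exact hirr ⟨hF, hc⟩
    obtain ⟨G, H, hG0, hH0, hGH, χ, hχ⟩ := hex
    have hdisj : G ⊓ H = ⊥ := bin_disj χ hχ
    have hGF : G ≤ F := le_of_le_of_eq le_sup_left hGH
    have hHF : H ≤ F := le_of_le_of_eq le_sup_right hGH
    have hGlt : G < F := by
      refine lt_of_le_of_ne hGF fun hEq => hH0 ?_
      have : H ≤ G := hEq ▸ hHF
      rw [← le_bot_iff, ← hdisj]
      exact le_inf this le_rfl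
    have hHlt : H < F := by
      refine lt_of_le_of_ne hHF fun hEq => hG0 ?_
      have : G ≤ H := hEq ▸ hGF
      rw [← le_bot_iff, ← hdisj]
      exact le_inf le_rfl this
    obtain ⟨sG, irrG, leG, ΦG, hΦG⟩ := IH G hGlt hG0
    obtain ⟨sH, irrH, leH, ΦH, hΦH⟩ := IH H hHlt hH0
    have hst : Disjoint sG sH := by
      rw [Finset.disjoint_left]
      intro C hCG hCH
      have hC0 : C ≠ ⊥ := (irrG C hCG).1
      refine hC0 ?_
      rw [← le_bot_iff, ← hdisj]
      exact le_inf (leG C hCG) (leH C hCH)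
    refine ⟨sG ∪ sH, ?_, ?_, ?_⟩
    · intro C hC
      rcases Finset.mem_union.mp hC with h | h
      · exact irrG C h
      · exact irrH C h
    · intro C hC
      rcases Finset.mem_union.mp hC with h | h
      · exact le_trans (leG C h) hGF
      · exact le_trans (leH C h) hHF
    · -- build E : pi over union ≃o pi sG × pi sH
      let eto : ((C : (sG ∪ sH : Finset L)) → Set.Iic (C : L)) →
          (((C : sG) → Set.Iic (C : L)) × ((C : sH) → Set.Iic (C : L))) :=
        fun h => (fun C => h ⟨(C : L), Finset.mem_union_left sH C.2⟩,
              fun C => h ⟨(C : L), Finset.mem_union_right sG C.2⟩)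
      let einv : (((C : sG) → Set.Iic (C : L)) × ((C : sH) → Set.Iic (C : L))) →
          ((C : (sG ∪ sH : Finset L)) → Set.Iic (C : L)) :=
        fun p C => if hc : (C : L) ∈ sG then p.1 ⟨(C : L), hc⟩
            else p.2 ⟨(C : L), (Finset.mem_union.mp C.2).resolve_left hc⟩
      have hli : ∀ h, einv (eto h) = h := by
        intro h
        funext C
        show (if hc : (C : L) ∈ sG then _ else _) = h C
        by_cases hc : (C : L) ∈ sG
        · simp only [dif_pos hc]; rfl
        · simp only [dif_neg hc]; rfl
      have hri : ∀ p, eto (einv p) = p := by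
        intro p
        refine Prod.ext (funext fun C => ?_) (funext fun C => ?_)
        · show (if hc : (C : L) ∈ sG then _ else _) = p.1 C
          simp only [dif_pos C.2]
        · have hn : (C : L) ∉ sG := Finset.disjoint_right.mp hst C.2
          show (if hc : (C : L) ∈ sG then _ else _) = p.2 C
          simp only [dif_neg hn]
      have hmr : ∀ (h h' : (C : (sG ∪ sH : Finset L)) → Set.Iic (C : L)),
          eto h ≤ eto h' ↔ h ≤ h' := by
        intro h h'
        constructor
        · intro hle C
          rcases Finset.mem_union.mp C.2 with hc | hc
          · exact hle.1 ⟨C.1, hc⟩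
          · exact hle.2 ⟨C.1, hc⟩
        · intro hle
          exact ⟨fun C => hle _, fun C => hle _⟩
      let E : (((C : (sG ∪ sH : Finset L)) → Set.Iic (C : L)) ≃o
          (((C : sG) → Set.Iic (C : L)) × ((C : sH) → Set.Iic (C : L)))) :=
        ⟨⟨eto, einv, hli, hri⟩, fun {h h'} => hmr h h'⟩
      have hPmr : ∀ (p q : ((C : sG) → Set.Iic (C : L)) × ((C : sH) → Set.Iic (C : L))),
          Equiv.prodCongr ΦG.toEquiv ΦH.toEquiv p ≤ Equiv.prodCongr ΦG.toEquiv ΦH.toEquiv q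
            ↔ p ≤ q := by
        intro p q
        simp only [Equiv.prodCongr_apply, Prod.le_def, Prod.map]
        exact and_congr ΦG.le_iff_le ΦH.le_iff_le
      let P : ((((C : sG) → Set.Iic (C : L)) × ((C : sH) → Set.Iic (C : L))) ≃o
          (Set.Iic G × Set.Iic H)) :=
        ⟨Equiv.prodCongr ΦG.toEquiv ΦH.toEquiv, fun {p q} => hPmr p q⟩
      refine ⟨(E.trans P).trans χ, ?_⟩
      intro h
      rw [OrderIso.trans_apply, OrderIso.trans_apply, hχ]
      have e1 : (((P (E h)).1 : Set.Iic G) : L) =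
          ⨆ C : sG, (h ⟨(C : L), Finset.mem_union_left sH C.2⟩ : L) := by
        show ((ΦG (fun C => h ⟨(C : L), Finset.mem_union_left sH C.2⟩) : Set.Iic G) : L) = _
        rw [hΦG]
      have e2 : (((P (E h)).2 : Set.Iic H) : L) =
          ⨆ C : sH, (h ⟨(C : L), Finset.mem_union_right sG C.2⟩ : L) := by
        show ((ΦH (fun C => h ⟨(C : L), Finset.mem_union_right sG C.2⟩) : Set.Iic H) : L) = _
        rw [hΦH]
      rw [e1, e2, iSup_union_subtype sG sH (fun C => (h C : L))]

theorem exists_max (𝓖 : Set L) {G F : L} (hG : G ∈ 𝓖) (hGF : G ≤ F) :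
    ∃ M, M ∈ maxUnder 𝓖 F ∧ G ≤ M := by
  set s : Set L := {x | x ∈ 𝓖 ∧ x ≤ F ∧ G ≤ x} with hs
  have hfin : s.Finite := Set.toFinite s
  have hne : s.Nonempty := ⟨G, hG, hGF, le_rfl⟩
  obtain ⟨M, hMs, hmax⟩ := Set.Finite.exists_maximalFor id s hfin hne
  exact ⟨M, ⟨hMs.1, hMs.2.1, fun G' hG'𝓖 hG'F hMG' =>
    le_antisymm (hmax ⟨hG'𝓖, hG'F, le_trans hMs.2.2 hMG'⟩ hMG') hMG'⟩, hMs.2.2⟩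

theorem forward (𝓖 : Set L) (hB : IsBuildingSet 𝓖) :
    (∀ G ∈ 𝓖, G ≠ ⊥) ∧ (∀ F : L, IsIrred F → F ∈ 𝓖) ∧
      ∀ G ∈ 𝓖, ∀ G' ∈ 𝓖, G ⊓ G' ≠ ⊥ → G ⊔ G' ∈ 𝓖 := by
  obtain ⟨h0, hbld⟩ := hB
  refine ⟨h0, ?_, ?_⟩
  · -- irreducibles are in 𝓖
    intro F hirr
    obtain ⟨φ, hφ⟩ := hbld F hirr.1
    by_cases hFG : F ∈ 𝓖
    · exact hFG
    exfalso
    -- F is the sup of the maximal elements below it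
    have hFsup : F ≤ ⨆ M : maxUnder 𝓖 F, (M : L) := by
      have h1 : F = ⨆ M : maxUnder 𝓖 F, ((φ.symm ⟨F, le_rfl⟩ M : Set.Iic (M : L)) : L) := by
        conv_lhs => rw [show F = ((⟨F, le_rfl⟩ : Set.Iic F) : L) from rfl,
          ← φ.apply_symm_apply ⟨F, le_rfl⟩]
        rw [hφ]
      conv_lhs => rw [h1]
      exact iSup_mono fun M => (φ.symm ⟨F, le_rfl⟩ M).2
    -- maxUnder is nonempty
    have hne : Nonempty (maxUnder 𝓖 F) := by
      by_contra hne
      have he : IsEmpty (maxUnder 𝓖 F) := not_nonempty_iff.mp hne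
      rw [iSup_of_empty] at hFsup
      exact hirr.1 (le_bot_iff.mp hFsup)
    -- no maximal element equals F
    have hMne : ∀ M : maxUnder 𝓖 F, (M : L) ≠ F := by
      intro M hMF
      exact hFG (hMF ▸ M.2.1)
    obtain ⟨M₀⟩ := hne
    -- there are two distinct maximal elements
    have hM₁ : ∃ M₁ : maxUnder 𝓖 F, M₁ ≠ M₀ := by
      by_contra hc
      push_neg at hc
      have : F ≤ (M₀ : L) := le_trans hFsup (iSup_le fun M => by rw [hc M])
      exact hMne M₀ (le_antisymm M₀.2.2.1 this)
    obtain ⟨M₁, hM₁⟩ := hM₁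
    obtain ⟨χ, hχ⟩ := JD_split φ hφ M₀
    refine hirr.2 ⟨(M₀ : L), ⨆ M ∈ {M : maxUnder 𝓖 F | M ≠ M₀}, (M : L), ?_, ?_, ?_, χ, hχ⟩
    · exact h0 _ M₀.2.1
    · intro hc
      refine h0 _ M₁.2.1 (le_bot_iff.mp ?_)
      rw [← hc]
      exact le_iSup₂_of_le M₁ hM₁ le_rfl
    · refine le_antisymm (sup_le M₀.2.2.1 (iSup₂_le fun M _ => M.2.2.1)) ?_
      refine le_trans hFsup (iSup_le fun M => ?_)
      by_cases hM : M = M₀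
      · rw [hM]; exact le_sup_left
      · exact le_sup_of_le_right (le_iSup₂_of_le M hM le_rfl)
  · -- closure under joins with nonzero meet
    intro G hG G' hG' hmeet
    have hF0 : G ⊔ G' ≠ ⊥ := fun hc => h0 G hG (le_bot_iff.mp (hc ▸ le_sup_left))
    obtain ⟨φ, hφ⟩ := hbld (G ⊔ G') hF0
    obtain ⟨M, hM, hGM⟩ := exists_max 𝓖 hG (le_sup_left (b := G'))
    obtain ⟨M', hM', hG'M'⟩ := exists_max 𝓖 hG' (le_sup_right (a := G))
    by_cases hMM : M = M'
    · subst hMM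
      have : G ⊔ G' = M := le_antisymm (sup_le hGM hG'M') hM.2.1
      exact this ▸ hM.1
    · exfalso
      have hij : (⟨M, hM⟩ : maxUnder 𝓖 (G ⊔ G')) ≠ ⟨M', hM'⟩ := by
        intro h
        exact hMM (congrArg Subtype.val h)
      have hd := JD_disj φ hφ hij
      simp only at hd
      exact hmeet (le_bot_iff.mp (hd ▸ inf_le_inf hGM hG'M'))

theorem backward (𝓖 : Set L) (h0 : ∀ G ∈ 𝓖, G ≠ ⊥)
    (h2 : ∀ F : L, IsIrred F → F ∈ 𝓖)
    (h3 : ∀ G ∈ 𝓖, ∀ G' ∈ 𝓖, G ⊓ G' ≠ ⊥ → G ⊔ G' ∈ 𝓖) :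
    IsBuildingSet 𝓖 := by
  refine ⟨h0, fun F hF => ?_⟩
  obtain ⟨s, irr, les, Φ, hΦ⟩ := exists_decomp F hF
  -- basic facts about the irreducible pieces
  have hCG : ∀ C : s, (C : L) ∈ 𝓖 := fun C => h2 _ (irr _ C.2)
  have hC0 : ∀ C : s, (C : L) ≠ ⊥ := fun C => (irr _ C.2).1
  have hCF : ∀ C : s, (C : L) ≤ F := fun C => les _ C.2
  -- choose a maximal element above each piece
  have hmax : ∀ C : s, ∃ M, M ∈ maxUnder 𝓖 F ∧ (C : L) ≤ M :=
    fun C => exists_max 𝓖 (hCG C) (hCF C)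
  let σ : s → maxUnder 𝓖 F := fun C => ⟨(hmax C).choose, (hmax C).choose_spec.1⟩
  have hσ : ∀ C : s, (C : L) ≤ ((σ C : maxUnder 𝓖 F) : L) :=
    fun C => (hmax C).choose_spec.2
  -- if a maximal element meets a piece nontrivially, it contains it
  have k1 : ∀ (M : maxUnder 𝓖 F) (C : s), (M : L) ⊓ (C : L) ≠ ⊥ → (C : L) ≤ (M : L) := by
    intro M C hne
    have hj : (M : L) ⊔ (C : L) ∈ 𝓖 := h3 _ M.2.1 _ (hCG C) hne
    have := M.2.2.2 _ hj (sup_le M.2.2.1 (hCF C)) le_sup_left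
    exact le_of_le_of_eq le_sup_right this
  -- each piece lies below a unique maximal element
  have k3 : ∀ (C : s) (M : maxUnder 𝓖 F), (C : L) ≤ (M : L) → σ C = M := by
    intro C M hCM
    have hne : ((σ C : maxUnder 𝓖 F) : L) ⊓ (M : L) ≠ ⊥ := by
      intro hc
      exact hC0 C (le_bot_iff.mp (hc ▸ le_inf (hσ C) hCM))
    have hj : ((σ C : maxUnder 𝓖 F) : L) ⊔ (M : L) ∈ 𝓖 :=
      h3 _ (σ C).2.1 _ M.2.1 hne
    have hjF : ((σ C : maxUnder 𝓖 F) : L) ⊔ (M : L) ≤ F := sup_le (σ C).2.2.1 M.2.2.1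
    have e1 := (σ C).2.2.2 _ hj hjF le_sup_left
    have e2 := M.2.2.2 _ hj hjF le_sup_right
    exact Subtype.ext (e1.symm.trans e2)
  have k4 : ∀ (M : maxUnder 𝓖 F) (C : s),
      (M : L) ⊓ (C : L) = if σ C = M then (C : L) else ⊥ := by
    intro M C
    by_cases hc : σ C = M
    · rw [if_pos hc, inf_eq_right]
      exact hc ▸ hσ C
    · rw [if_neg hc]
      by_contra hne
      exact hc (k3 C M (k1 M C hne))
  -- the order isomorphism between the two products
  let eto : (∀ M : maxUnder 𝓖 F, Set.Iic (M : L)) → (∀ C : s, Set.Iic (C : L)) :=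
    fun k C => ⟨(k (σ C) : L) ⊓ (C : L), inf_le_right⟩
  let einv : (∀ C : s, Set.Iic (C : L)) → (∀ M : maxUnder 𝓖 F, Set.Iic (M : L)) :=
    fun g M => ⟨⨆ C : s, (if σ C = M then (g C : L) else ⊥), by
      refine iSup_le fun C => ?_
      by_cases hc : σ C = M
      · rw [if_pos hc]
        exact le_trans (g C).2 (hc ▸ hσ C)
      · rw [if_neg hc]
        exact bot_le⟩
  -- the "h-functions" used to compute with Φ
  have heinv_coe : ∀ (g : ∀ C : s, Set.Iic (C : L)) (M : maxUnder 𝓖 F),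
      ((einv g M : Set.Iic (M : L)) : L) =
        ((Φ (fun C => if σ C = M then g C else ⟨⊥, bot_le⟩) : Set.Iic F) : L) := by
    intro g M
    rw [hΦ]
    show ⨆ C : s, (if σ C = M then (g C : L) else ⊥) = _
    refine iSup_congr fun C => ?_
    by_cases hc : σ C = M
    · rw [if_pos hc, if_pos hc]
    · rw [if_neg hc, if_neg hc]
  have hli : ∀ k, einv (eto k) = k := by
    intro k
    funext M
    refine Subtype.ext ?_
    show ⨆ C : s, (if σ C = M then ((k (σ C) : L) ⊓ (C : L)) else ⊥) = (k M : L)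
    have hpt : ∀ C : s, (if σ C = M then ((k (σ C) : L) ⊓ (C : L)) else ⊥) =
        (k M : L) ⊓ (C : L) := by
      intro C
      by_cases hc : σ C = M
      · rw [if_pos hc, hc]
      · rw [if_neg hc]
        refine (le_bot_iff.mp ?_).symm
        have : (k M : L) ⊓ (C : L) ≤ (M : L) ⊓ (C : L) := inf_le_inf_right _ (k M).2
        rw [k4 M C, if_neg hc] at this
        exact this
    rw [iSup_congr hpt]
    exact (JD_sup_inf Φ hΦ (le_trans (k M).2 M.2.2.1)).symm
  have hri : ∀ g, eto (einv g) = g := by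
    intro g
    funext C
    refine Subtype.ext ?_
    show ((einv g (σ C) : Set.Iic ((σ C : maxUnder 𝓖 F) : L)) : L) ⊓ (C : L) = (g C : L)
    rw [heinv_coe g (σ C), JD_apply_inf Φ hΦ _ C]
    simp
  have hmono : ∀ (k k' : ∀ M : maxUnder 𝓖 F, Set.Iic (M : L)), k ≤ k' → eto k ≤ eto k' := by
    intro k k' hle C
    exact inf_le_inf_right _ (Subtype.coe_le_coe.mpr (hle (σ C)))
  have hmono' : ∀ (g g' : ∀ C : s, Set.Iic (C : L)), g ≤ g' → einv g ≤ einv g' := by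
    intro g g' hle M
    show ⨆ C : s, _ ≤ (⨆ C : s, _ : L)
    refine iSup_mono fun C => ?_
    by_cases hc : σ C = M
    · rw [if_pos hc, if_pos hc]
      exact Subtype.coe_le_coe.mpr (hle C)
    · rw [if_neg hc, if_neg hc]
  have hmr : ∀ (k k' : ∀ M : maxUnder 𝓖 F, Set.Iic (M : L)), eto k ≤ eto k' ↔ k ≤ k' := by
    intro k k'
    refine ⟨fun hle => ?_, hmono k k'⟩
    have := hmono' _ _ hle
    rw [hli k, hli k'] at this
    exact this
  let E : (∀ M : maxUnder 𝓖 F, Set.Iic (M : L)) ≃o (∀ C : s, Set.Iic (C : L)) :=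
    ⟨⟨eto, einv, hli, hri⟩, fun {k k'} => hmr k k'⟩
  refine ⟨E.trans Φ, ?_⟩
  intro k
  rw [OrderIso.trans_apply, hΦ]
  show ⨆ C : s, ((k (σ C) : L) ⊓ (C : L)) = ⨆ M : maxUnder 𝓖 F, (k M : L)
  refine le_antisymm (iSup_le fun C => le_trans inf_le_left
    (le_iSup (fun M : maxUnder 𝓖 F => (k M : L)) (σ C))) (iSup_le fun M => ?_)
  conv_lhs => rw [JD_sup_inf Φ hΦ (le_trans (k M).2 M.2.2.1)]
  refine iSup_le fun C => ?_
  by_cases hc : σ C = M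
  · refine le_trans (le_of_eq ?_) (le_iSup (fun C : s => ((k (σ C) : L) ⊓ (C : L))) C)
    rw [hc]
  · have : (k M : L) ⊓ (C : L) ≤ (M : L) ⊓ (C : L) := inf_le_inf_right _ (k M).2
    rw [k4 M C, if_neg hc] at this
    exact le_trans this bot_le


/-- a subset `𝓖 ⊆ L \ {⊥}` of a finite geometric lattice is a
building set if and only if it contains every irreducible element and is
closed under joins of pairs with nonzero meet. -/
theorem building_set_char (hL : IsGeometricLattice L) (𝓖 : Set L) :
    IsBuildingSet 𝓖 ↔
      ((∀ G ∈ 𝓖, G ≠ ⊥) ∧ (∀ F : L, IsIrred F → F ∈ 𝓖) ∧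
        ∀ G ∈ 𝓖, ∀ G' ∈ 𝓖, G ⊓ G' ≠ ⊥ → G ⊔ G' ∈ 𝓖) :=
  ⟨fun h => forward 𝓖 h, fun h => backward 𝓖 h.1 h.2.1 h.2.2⟩
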